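/- Let f : ℝ → ℝ be continuous with limsup_{|s|→∞} f(s)/s ≤ 0, and let u ∈ L²(Ω) on a finite-measure set Ω. Then for every ν > 0 there exists C_ν ≥ 0 (independent of u) such that ∫_Ω f(u(x))·u(x) dx ≤ ν·‖u‖²_{L²(Ω)} + C_ν. -/

import Mathlib

open MeasureTheory

theorem stmt_3 {α : Type*} [MeasurableSpace α] (μ : Measure α) (Ω : Set α)
    (hΩ : μ Ω < ⊤) (f : ℝ → ℝ) (hf : Continuous f)
    (hdis : ∀ ν : ℝ, 0 < ν → ∃ R : ℝ, 0 < R ∧ ∀ s : ℝ, R < |s| → f s * s ≤ ν * s ^ 2) :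
    ∀ ν : ℝ, 0 < ν → ∃ C : ℝ, 0 ≤ C ∧ ∀ u : α → ℝ,
      Integrable (fun x => f (u x) * u x) (μ.restrict Ω) →
      Integrable (fun x => (u x) ^ 2) (μ.restrict Ω) →
      ∫ x in Ω, f (u x) * u x ∂μ ≤ ν * ∫ x in Ω, (u x) ^ 2 ∂μ + C := by
  intro ν hν
  obtain ⟨R, hR, hbound⟩ := hdis ν hν
  -- bound on compact set
  have hg : Continuous fun s => f s * s := hf.mul continuous_id
  obtain ⟨s0, _, hs0⟩ := isCompact_Icc.exists_isMaxOn
    (Set.nonempty_Icc.2 (by linarith : -R ≤ R)) hg.continuousOn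
  set M : ℝ := max (f s0 * s0) 0 with hM
  have hM0 : 0 ≤ M := le_max_right _ _
  have hpt : ∀ s : ℝ, f s * s ≤ ν * s ^ 2 + M := by
    intro s
    rcases le_or_gt |s| R with h | h
    · have hs : s ∈ Set.Icc (-R) R := abs_le.1 h
      have := hs0 hs
      have h1 : f s * s ≤ M := le_trans this (le_max_left _ _)
      nlinarith [sq_nonneg s]
    · have := hbound s h
      linarith
  refine ⟨M * (μ Ω).toReal, mul_nonneg hM0 ENNReal.toReal_nonneg, ?_⟩
  intro u hint hint2
  have hfin : IsFiniteMeasure (μ.restrict Ω) :=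
    ⟨by simpa [Measure.restrict_apply_univ] using hΩ⟩
  have hrhs : Integrable (fun x => ν * (u x) ^ 2 + M) (μ.restrict Ω) :=
    (hint2.const_mul ν).add (integrable_const M)
  have hmono : ∫ x in Ω, f (u x) * u x ∂μ ≤ ∫ x in Ω, (ν * (u x) ^ 2 + M) ∂μ :=
    integral_mono hint hrhs fun x => hpt (u x)
  have hsplit : ∫ x in Ω, (ν * (u x) ^ 2 + M) ∂μ
      = ν * ∫ x in Ω, (u x) ^ 2 ∂μ + M * (μ Ω).toReal := by
    rw [integral_add (hint2.const_mul ν) (integrable_const M), integral_const_mul,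
      integral_const]
    simp [Measure.restrict_apply_univ, smul_eq_mul, mul_comm, Measure.real]
  linarith [hmono, hsplit.le, hsplit.ge]
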